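/- Let g be an integrable LCK Lie algebra with |θ| = 1. Then ⟨U,V⟩ is a 2-dimensional Lie subalgebra of g (with [U,V] = (δθ + n)V), and g is isomorphic to the semidirect product ⟨U,V⟩ ⋉_ρ h, where h = ⟨U,V⟩^⊥ and ρ is given by the adjoint action. -/

import Mathlib

/-- An integrable LCK Lie algebra `L` of dimension `2n+2` with `|θ| = 1`
(same setup as Statement 9).  With `δθ = tr(ad_U)`, the conclusion is:
`⁅U,V⁆ = (δθ + n) • V`; `⟨U,V⟩ = span{U,V}` is a Lie subalgebra;
`h = ⟨U,V⟩^⊥` is an ideal; and `L` is the (vector space) direct sum of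
`⟨U,V⟩` and `h`, i.e. `L ≅ ⟨U,V⟩ ⋉_ρ h` with `ρ` the adjoint action. -/
theorem statement10
    (L : Type*) [LieRing L] [LieAlgebra ℝ L]
    (g : L →ₗ[ℝ] L →ₗ[ℝ] ℝ) (J : L →ₗ[ℝ] L) (U V : L)
    (hgsym : ∀ (X Y : L), g X Y = g Y X)
    (hgpos : ∀ (X : L), X ≠ 0 → 0 < g X X)
    (hJJ : ∀ (X : L), J (J X) = -X)
    (hherm : ∀ (X Y : L), g (J X) (J Y) = g X Y)
    (hNJ : ∀ (X Y : L), ⁅J X, J Y⁆ - J ⁅J X, Y⁆ - J ⁅X, J Y⁆ - ⁅X, Y⁆ = 0)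
    (hVJU : V = J U)
    (hanti : ∀ (X : L), g V X = -(g U (J X)))
    (hnorm : g U U = 1)
    (hdθ : ∀ (X Y : L), g U ⁅X, Y⁆ = 0)
    (hLCK : ∀ (X Y Z : L),
      -(g ⁅X, Y⁆ (J Z)) + g ⁅X, Z⁆ (J Y) - g ⁅Y, Z⁆ (J X)
      = g U X * g Y (J Z) - g U Y * g X (J Z) + g U Z * g X (J Y))
    (hint : ∀ (X Y Z : L),
      g V X * g V ⁅Y, Z⁆ - g V Y * g V ⁅X, Z⁆ + g V Z * g V ⁅X, Y⁆ = 0)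
    [FiniteDimensional ℝ L] (n : ℕ) (hdim : Module.finrank ℝ L = 2 * n + 2) :
    ⁅U, V⁆ = (LinearMap.trace ℝ L (LieAlgebra.ad ℝ L U) + (n : ℝ)) • V
    ∧ (∀ X Y, X ∈ Submodule.span ℝ ({U, V} : Set L) →
        Y ∈ Submodule.span ℝ ({U, V} : Set L) →
        ⁅X, Y⁆ ∈ Submodule.span ℝ ({U, V} : Set L))
    ∧ (∀ (X Y : L), Y ∈ LinearMap.ker (g U) ⊓ LinearMap.ker (g V) →
        ⁅X, Y⁆ ∈ LinearMap.ker (g U) ⊓ LinearMap.ker (g V))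
    ∧ IsCompl (Submodule.span ℝ ({U, V} : Set L))
        (LinearMap.ker (g U) ⊓ LinearMap.ker (g V)) := by
  -- basic identities
  have hJU : J U = V := hVJU.symm
  have hJV : J V = -U := by rw [hVJU, hJJ]
  have hgUJ : ∀ X, g U (J X) = -(g V X) := by intro X; rw [hanti]; ring
  have hgVJ : ∀ X, g V (J X) = g U X := by
    intro X; rw [hanti, hJJ, map_neg]; ring
  have hgUV : g U V = 0 := by
    have h := hanti U
    rw [hJU] at h
    have h2 := hgsym V U
    linarith
  have hgVU : g V U = 0 := by rw [hgsym]; exact hgUV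
  have hgVV : g V V = 1 := by
    have h := hherm U U
    rw [← hVJU] at h
    rw [h]; exact hnorm
  have hgJ : ∀ X Y, g (J X) Y = -(g X (J Y)) := by
    intro X Y
    have h2 := hherm X (J Y)
    rw [hJJ, map_neg] at h2
    linarith
  -- J preserves h
  have hJmem : ∀ Y, g U Y = 0 → g V Y = 0 → g U (J Y) = 0 ∧ g V (J Y) = 0 := by
    intro Y h1 h2
    refine ⟨?_, ?_⟩
    · rw [hgUJ, h2, neg_zero]
    · rw [hgVJ, h1]
  -- ideal lemmas
  have idU : ∀ Y, g U Y = 0 → g V Y = 0 → g V ⁅U, Y⁆ = 0 := by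
    intro Y h1 h2
    have h := hint U Y V
    rw [hgVU, hgVV, h2] at h
    linarith
  have idV : ∀ Y, g U Y = 0 → g V Y = 0 → g V ⁅V, Y⁆ = 0 := by
    intro Y h1 h2
    obtain ⟨hj1, hj2⟩ := hJmem Y h1 h2
    have hN := hNJ U Y
    rw [hJU] at hN
    have hJb : J ⁅V, Y⁆ = ⁅V, J Y⁆ - J ⁅U, J Y⁆ - ⁅U, Y⁆ := by
      rw [sub_sub, sub_sub, sub_eq_zero] at hN
      rw [hN]; abel
    have h := hanti ⁅V, Y⁆
    rw [hJb, map_sub, map_sub] at h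
    have h4 : g V ⁅U, J Y⁆ = 0 := idU (J Y) hj1 hj2
    have h5 := hgUJ ⁅U, J Y⁆
    rw [hdθ, hdθ, h5, h4] at h
    simpa using h
  have idAll : ∀ (X Y : L), g U Y = 0 → g V Y = 0 → g V ⁅X, Y⁆ = 0 := by
    intro X Y h1 h2
    have h := hint X Y V
    have h3 : g V ⁅Y, V⁆ = 0 := by
      have hsk : ⁅Y, V⁆ = -⁅V, Y⁆ := by simp
      rw [hsk, map_neg, idV Y h1 h2, neg_zero]
    rw [h2, hgVV, h3] at h
    linarith
  -- the key formula g ⁅U,V⁆ X = g V ⁅V, J X⁆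
  have hstar : ∀ X, g ⁅U, V⁆ X = g V ⁅V, J X⁆ := by
    intro X
    have h := hLCK U V (J X)
    rw [hJJ, hJV, hJU, hnorm, hgUV] at h
    simp only [map_neg, hgUJ, hnorm] at h
    have e1 := hdθ U (J X)
    have e2 := hgsym ⁅U, J X⁆ U
    have e3 := hgsym ⁅V, J X⁆ V
    ring_nf at h
    linarith [h, e1, e2, e3]
  -- ⁅U,V⁆ = c • V with c = g V ⁅U,V⁆
  have hUVc : ⁅U, V⁆ = g V ⁅U, V⁆ • V := by
    set c := g V ⁅U, V⁆ with hc
    set W := ⁅U, V⁆ - c • V with hWdef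
    have hWU : g U W = 0 := by
      simp [hWdef, map_sub, map_smul, hdθ, hgUV, smul_eq_mul]
    have hWV : g V W = 0 := by
      simp [hWdef, map_sub, map_smul, hgVV, smul_eq_mul, ← hc]
    have h1 : g ⁅U, V⁆ W = 0 := by
      rw [hstar W]
      exact idV (J W) (hJmem W hWU hWV).1 (hJmem W hWU hWV).2
    have hWW : g W W = 0 := by
      have : g W W = g ⁅U, V⁆ W - c * g V W := by
        rw [hWdef]
        simp only [map_sub, map_smul, LinearMap.sub_apply, LinearMap.smul_apply, smul_eq_mul]
        rw [hgsym V ⁅U, V⁆]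
      rw [this, h1, hWV]; ring
    have hW0 : W = 0 := by
      by_contra hne
      exact (hgpos W hne).ne' hWW
    exact sub_eq_zero.mp hW0
  have hcval : g V ⁅U, V⁆ = LinearMap.trace ℝ L (LieAlgebra.ad ℝ L U) + (n : ℝ) := by
    -- inner product structure induced by g
    letI core : InnerProductSpace.Core ℝ L :=
      { inner := fun x y => g x y
        conj_inner_symm := fun x y => by simpa using hgsym y x
        re_inner_nonneg := fun x => by
          by_cases h : x = 0
          · simp [h]
          · simpa using (hgpos x h).le
        add_left := fun x y z => by simp [map_add, LinearMap.add_apply]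
        smul_left := fun x y r => by simp [map_smul, LinearMap.smul_apply, smul_eq_mul]
        definite := fun x hx => by
          by_contra h
          exact (hgpos x h).ne' (by simpa using hx) }
    letI : NormedAddCommGroup L := core.toNormedAddCommGroup
    letI : InnerProductSpace ℝ L := InnerProductSpace.ofCore core.toCore
    set b := stdOrthonormalBasis ℝ L with hbdef
    have hbii : ∀ i, g (b i) (b i) = 1 := by
      intro i
      have h := orthonormal_iff_ite.mp b.orthonormal i i
      simp only [if_pos rfl] at h
      exact h
    have htr : ∀ f : L →ₗ[ℝ] L, LinearMap.trace ℝ L f = ∑ i, g (b i) (f (b i)) := by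
      intro f
      rw [LinearMap.trace_eq_matrix_trace ℝ b.toBasis f, Matrix.trace]
      apply Finset.sum_congr rfl
      intro i _
      rw [Matrix.diag_apply, LinearMap.toMatrix_apply, OrthonormalBasis.coe_toBasis_repr_apply,
        OrthonormalBasis.repr_apply_apply, OrthonormalBasis.coe_toBasis]
      rfl
    have hexp : ∀ (φ : L →ₗ[ℝ] ℝ) (x : L), ∑ i, g x (b i) * φ (b i) = φ x := by
      intro φ x
      conv_rhs => rw [← b.sum_repr x]
      rw [map_sum]
      apply Finset.sum_congr rfl
      intro i _
      rw [map_smul, smul_eq_mul]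
      congr 1
      have h : b.repr x i = g (b i) x := by
        rw [OrthonormalBasis.repr_apply_apply]; rfl
      rw [h, hgsym]
    -- pointwise key identity
    have key1 : ∀ Y : L, g ⁅U, Y⁆ Y + g ⁅U, J Y⁆ (J Y)
        = g V ⁅Y, J Y⁆ - g Y Y + g U Y * g U Y + g V Y * g V Y := by
      intro Y
      have h := hLCK U Y (J Y)
      rw [hJJ, hJU, hnorm] at h
      simp only [map_neg, hgUJ] at h
      have e3 := hgsym ⁅Y, J Y⁆ V
      ring_nf at h ⊢
      linarith [h, e3]
    have hsplit : ∀ Y : L, g V ⁅Y, J Y⁆ = g V Y * g V ⁅V, J Y⁆ - g U Y * g V ⁅V, Y⁆ := by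
      intro Y
      have h := hint V Y (J Y)
      rw [hgVV, hgVJ] at h
      linarith
    set A : L →ₗ[ℝ] L := LieAlgebra.ad ℝ L U with hAdef
    have hAapp : ∀ Y : L, A Y = ⁅U, Y⁆ := fun Y => rfl
    have hJJlin : (J * J : L →ₗ[ℝ] L) = -1 := by
      ext x
      simp [Module.End.mul_apply, hJJ]
    have htrJAJ : LinearMap.trace ℝ L (J * A * J) = - LinearMap.trace ℝ L A := by
      rw [mul_assoc, LinearMap.trace_mul_comm, mul_assoc, hJJlin]
      simp
    -- pointwise formula for the symmetrized operator
    have hM : ∀ Y : L, g Y ((A - J * A * J) Y)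
        = g V ⁅Y, J Y⁆ - g Y Y + g U Y * g U Y + g V Y * g V Y := by
      intro Y
      have k := key1 Y
      have e1 : g ⁅U, Y⁆ Y = g Y (A Y) := by rw [hgsym, hAapp]
      have e2 : g ⁅U, J Y⁆ (J Y) = -(g Y (J ⁅U, J Y⁆)) := by
        rw [hgsym ⁅U, J Y⁆ (J Y), hgJ]
      have e4 : g Y ((A - J * A * J) Y) = g Y (A Y) - g Y (J ⁅U, J Y⁆) := by
        simp only [LinearMap.sub_apply, Module.End.mul_apply, map_sub, hAapp]
      rw [e4]
      rw [e1, e2] at k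
      linarith
    -- sum evaluations
    set βl : L →ₗ[ℝ] ℝ := (g V) ∘ₗ (LieAlgebra.ad ℝ L V) with hβdef
    have hβ : ∀ X : L, βl X = g V ⁅V, X⁆ := fun X => rfl
    have hsum4 : ∑ i, g V ⁅b i, J (b i)⁆ = 2 * g V ⁅U, V⁆ := by
      have e1 := hexp (βl ∘ₗ J) V
      have e2 := hexp βl U
      have e3 : (βl ∘ₗ J) V = g V ⁅U, V⁆ := by
        rw [LinearMap.comp_apply, hJV, map_neg, hβ]
        have : (⁅V, U⁆ : L) = -⁅U, V⁆ := by simp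
        rw [this, map_neg, neg_neg]
      have e4 : βl U = -(g V ⁅U, V⁆) := by
        rw [hβ]
        have : (⁅V, U⁆ : L) = -⁅U, V⁆ := by simp
        rw [this, map_neg]
      calc ∑ i, g V ⁅b i, J (b i)⁆
          = ∑ i, (g V (b i) * (βl ∘ₗ J) (b i) - g U (b i) * βl (b i)) := by
            apply Finset.sum_congr rfl
            intro i _
            rw [hsplit (b i), LinearMap.comp_apply, hβ, hβ]
        _ = (∑ i, g V (b i) * (βl ∘ₗ J) (b i)) - ∑ i, g U (b i) * βl (b i) := by
            rw [Finset.sum_sub_distrib]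
        _ = 2 * g V ⁅U, V⁆ := by rw [e1, e2, e3, e4]; ring
    have hsum1 : ∑ i, g (b i) (b i) = ((2 * n + 2 : ℕ) : ℝ) := by
      rw [Finset.sum_congr rfl (fun i _ => hbii i), Finset.sum_const]
      simp [hdim]
    have hsum2 : ∑ i, g U (b i) * g U (b i) = 1 := by
      have h := hexp (g U) U
      rw [hnorm] at h
      exact h
    have hsum3 : ∑ i, g V (b i) * g V (b i) = 1 := by
      have h := hexp (g V) V
      rw [hgVV] at h
      exact h
    have htrM : LinearMap.trace ℝ L A - LinearMap.trace ℝ L (J * A * J)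
        = 2 * g V ⁅U, V⁆ - ((2 * n + 2 : ℕ) : ℝ) + 1 + 1 := by
      have h1 : LinearMap.trace ℝ L (A - J * A * J)
          = ∑ i, (g V ⁅b i, J (b i)⁆ - g (b i) (b i) + g U (b i) * g U (b i)
              + g V (b i) * g V (b i)) := by
        rw [htr]
        exact Finset.sum_congr rfl fun i _ => hM (b i)
      have h2 := map_sub (LinearMap.trace ℝ L) A (J * A * J)
      rw [← h2, h1, Finset.sum_add_distrib, Finset.sum_add_distrib, Finset.sum_sub_distrib,
        hsum1, hsum2, hsum3, hsum4]
    rw [htrJAJ] at htrM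
    push_cast at htrM
    linarith
  -- span membership helpers
  have hUmem : U ∈ Submodule.span ℝ ({U, V} : Set L) :=
    Submodule.subset_span (by simp)
  have hVmem : V ∈ Submodule.span ℝ ({U, V} : Set L) :=
    Submodule.subset_span (by simp)
  have hUVmem : ⁅U, V⁆ ∈ Submodule.span ℝ ({U, V} : Set L) := by
    rw [hUVc]; exact Submodule.smul_mem _ _ hVmem
  have hVUmem : ⁅V, U⁆ ∈ Submodule.span ℝ ({U, V} : Set L) := by
    have : (⁅V, U⁆ : L) = -⁅U, V⁆ := by simp
    rw [this]; exact Submodule.neg_mem _ hUVmem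
  refine ⟨?_, ?_, ?_, ?_, ?_⟩
  · -- part 1
    rw [← hcval]
    exact hUVc
  · -- part 2 : span{U,V} is a subalgebra
    intro X Y hX hY
    rcases Submodule.mem_span_pair.mp hX with ⟨a₁, a₂, rfl⟩
    rcases Submodule.mem_span_pair.mp hY with ⟨c₁, c₂, rfl⟩
    have hexpand : (⁅a₁ • U + a₂ • V, c₁ • U + c₂ • V⁆ : L)
        = (a₁ * c₂) • ⁅U, V⁆ + (a₂ * c₁) • ⁅V, U⁆ := by
      simp only [lie_add, add_lie, smul_lie, lie_smul, lie_self, smul_zero, add_zero, zero_add,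
        smul_smul]
      rw [mul_comm c₁ a₂, mul_comm c₂ a₁, add_comm]
    rw [hexpand]
    exact Submodule.add_mem _ (Submodule.smul_mem _ _ hUVmem) (Submodule.smul_mem _ _ hVUmem)
  · -- part 3 : h is an ideal
    intro X Y hY
    rw [Submodule.mem_inf] at hY ⊢
    obtain ⟨h1, h2⟩ := hY
    rw [LinearMap.mem_ker] at h1 h2
    exact ⟨LinearMap.mem_ker.mpr (hdθ X Y), LinearMap.mem_ker.mpr (idAll X Y h1 h2)⟩
  · -- part 4a : disjointness
    rw [disjoint_iff_inf_le]
    intro x hx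
    rw [Submodule.mem_inf] at hx
    obtain ⟨hx1, hx2⟩ := hx
    rcases Submodule.mem_span_pair.mp hx1 with ⟨a₁, a₂, rfl⟩
    rw [Submodule.mem_inf] at hx2
    obtain ⟨h1, h2⟩ := hx2
    rw [LinearMap.mem_ker] at h1 h2
    simp only [map_add, map_smul, LinearMap.add_apply, LinearMap.smul_apply,
      smul_eq_mul, hnorm, hgUV, hgVU, hgVV] at h1 h2
    have ha1 : a₁ = 0 := by linarith
    have ha2 : a₂ = 0 := by linarith
    simp [ha1, ha2]
  · -- part 4b : codisjointness
    rw [codisjoint_iff, eq_top_iff]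
    intro x _
    refine Submodule.mem_sup.mpr
      ⟨g U x • U + g V x • V, ?_, x - (g U x • U + g V x • V), ?_, by abel⟩
    · exact Submodule.add_mem _ (Submodule.smul_mem _ _ hUmem) (Submodule.smul_mem _ _ hVmem)
    · rw [Submodule.mem_inf]
      constructor <;> rw [LinearMap.mem_ker] <;>
        simp [map_sub, map_add, map_smul, smul_eq_mul, hnorm, hgUV, hgVU, hgVV, hgsym]
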